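/- Let μ be a symmetric Borel probability measure on ℝ with μ[x+h,∞) ≤ λ·μ[x,∞) for all x ≥ 0. Let f: ℝ → ℝ be convex with f(0)=0, with minimum attained at x₀ (x₀ = ∓∞ if f is monotone). Define Df(x) = f(x)−f(x−h) for x > x₀+h, Df(x) = f(x)−f(x₀) for x ∈ [x₀−h, x₀+h], and Df(x) = f(x)−f(x+h) for x < x₀−h. Then ∫(e^{f/2} − e^{−f/2})² dμ ≤ (8/(1−λ)²)·∫ e^{f(x)}(Df(x))² dμ(x). -/

import Mathlib

open MeasureTheory Set Real
open scoped ENNReal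



/-- exp difference bound: for `0 ≤ b ≤ a`,
`(e^{a/2} - e^{-a/2}) - (e^{b/2} - e^{-b/2}) ≤ (a-b) e^{a/2}`. -/
lemma gdiff_le {a b : ℝ} (hb : 0 ≤ b) (hba : b ≤ a) :
    (Real.exp (a/2) - Real.exp (-a/2)) - (Real.exp (b/2) - Real.exp (-b/2))
      ≤ (a - b) * Real.exp (a/2) := by
  have h1 : Real.exp (a/2) - Real.exp (b/2) ≤ (a-b)/2 * Real.exp (a/2) := by
    have : (b-a)/2 + 1 ≤ Real.exp ((b-a)/2) := Real.add_one_le_exp _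
    have h2 : Real.exp (b/2) = Real.exp (a/2) * Real.exp ((b-a)/2) := by
      rw [← Real.exp_add]; ring_nf
    nlinarith [Real.exp_pos (a/2)]
  have h2 : Real.exp (-b/2) - Real.exp (-a/2) ≤ (a-b)/2 * Real.exp (-b/2) := by
    have : (b-a)/2 + 1 ≤ Real.exp ((b-a)/2) := Real.add_one_le_exp _
    have h3 : Real.exp (-a/2) = Real.exp (-b/2) * Real.exp ((b-a)/2) := by
      rw [← Real.exp_add]; ring_nf
    nlinarith [Real.exp_pos (-b/2)]
  have h4 : Real.exp (-b/2) ≤ 1 := by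
    rw [Real.exp_le_one_iff]; linarith
  have h5 : (1:ℝ) ≤ Real.exp (a/2) := by
    rw [Real.one_le_exp_iff]; linarith
  nlinarith [Real.exp_pos (-b/2)]

/-- `e^{a/2} - e^{-a/2} ≤ a e^{a/2}` for `a ≥ 0`. -/
lemma gself_le {a : ℝ} (ha : 0 ≤ a) :
    Real.exp (a/2) - Real.exp (-a/2) ≤ a * Real.exp (a/2) := by
  have h1 : 1 - a ≤ Real.exp (-a) := by
    have := Real.add_one_le_exp (-a); linarith
  have h2 : Real.exp (-a/2) = Real.exp (a/2) * Real.exp (-a) := by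
    rw [← Real.exp_add]; ring_nf
  nlinarith [Real.exp_pos (a/2)]

/-- monotonicity of `t ↦ e^{t/2} - e^{-t/2}`. -/
lemma gmono {a b : ℝ} (hab : a ≤ b) :
    Real.exp (a/2) - Real.exp (-a/2) ≤ Real.exp (b/2) - Real.exp (-b/2) := by
  have h1 : Real.exp (a/2) ≤ Real.exp (b/2) := Real.exp_le_exp.2 (by linarith)
  have h2 : Real.exp (-b/2) ≤ Real.exp (-a/2) := Real.exp_le_exp.2 (by linarith)
  linarith



lemma shift_le (μ : Measure ℝ) [IsProbabilityMeasure μ] (h l : ℝ) (hh : 0 < h)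
    (htail : ∀ x : ℝ, 0 ≤ x → μ (Set.Ici (x + h)) ≤ ENNReal.ofReal l * μ (Set.Ici x))
    (ψ : ℝ → ℝ) (hmono : Monotone ψ) (hnn : ∀ x, 0 ≤ ψ x) (h0 : ∀ x ≤ (0:ℝ), ψ x = 0) :
    ∫⁻ x, ENNReal.ofReal (ψ (x - h)) ∂μ ≤ ENNReal.ofReal l * ∫⁻ x, ENNReal.ofReal (ψ x) ∂μ := by
  have hψm : Measurable ψ := hmono.measurable
  have hmono' : Monotone (fun x => ψ (x - h)) := fun a b hab => hmono (by linarith)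
  have h1 : ∫⁻ x, ENNReal.ofReal (ψ x) ∂μ = ∫⁻ t in Ioi (0:ℝ), μ {a | t < ψ a} :=
    lintegral_eq_lintegral_meas_lt μ (Filter.Eventually.of_forall hnn) hψm.aemeasurable
  have h2 : ∫⁻ x, ENNReal.ofReal (ψ (x - h)) ∂μ = ∫⁻ t in Ioi (0:ℝ), μ {a | t < ψ (a - h)} :=
    lintegral_eq_lintegral_meas_lt μ (Filter.Eventually.of_forall fun x => hnn _)
      hmono'.measurable.aemeasurable
  rw [h1, h2]
  have key : ∀ t ∈ Ioi (0:ℝ), μ {a | t < ψ (a - h)} ≤ ENNReal.ofReal l * μ {a | t < ψ a} := by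
    intro t ht
    simp only [mem_Ioi] at ht
    set U : Set ℝ := {a | t < ψ a} with hU
    rcases eq_empty_or_nonempty U with hUe | hUne
    · have hemp : {a : ℝ | t < ψ (a - h)} = ∅ := by
        ext a
        simp only [mem_setOf_eq, mem_empty_iff_false, iff_false, not_lt]
        by_contra hc
        push_neg at hc
        have hmem : a - h ∈ U := hc
        rw [hUe] at hmem
        exact hmem
      rw [hemp]
      simp
    · have hUsub : U ⊆ Ioi 0 := by
        intro a ha
        by_contra hc
        simp only [mem_Ioi, not_lt] at hc
        have := h0 a hc
        have : t < 0 := by simp only [hU, mem_setOf_eq] at ha; linarith [ha, this]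
        linarith
      have hbdd : BddBelow U := ⟨0, fun a ha => le_of_lt (hUsub ha)⟩
      set c := sInf U with hc
      have hc0 : 0 ≤ c := le_csInf hUne fun a ha => le_of_lt (hUsub ha)
      have hupper : ∀ a b : ℝ, a ∈ U → a ≤ b → b ∈ U := fun a b ha hab =>
        lt_of_lt_of_le ha (hmono hab)
      have hIoi : Ioi c ⊆ U := by
        intro x hx
        obtain ⟨u, hu, hux⟩ := exists_lt_of_csInf_lt hUne hx
        exact hupper u x hu (le_of_lt hux)
      by_cases hcU : c ∈ U
      · have hUeq : U = Ici c := by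
          apply le_antisymm
          · exact fun x hx => csInf_le hbdd hx
          · exact fun x hx => hupper c x hcU hx
        have hshift : {a : ℝ | t < ψ (a - h)} = Ici (c + h) := by
          ext a
          have : (t < ψ (a - h)) ↔ a - h ∈ U := Iff.rfl
          rw [mem_setOf_eq, this, hUeq]
          simp only [mem_Ici]
          constructor <;> intro <;> linarith
        rw [hshift, hUeq]
        exact htail c hc0
      · have hUeq : U = Ioi c := by
          apply le_antisymm
          · intro x hx
            rcases lt_or_eq_of_le (csInf_le hbdd hx) with h' | h'
            · exact h'
            · exact absurd (show c ∈ U by rw [hc, h']; exact hx) hcU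
          · exact hIoi
        have hshift : {a : ℝ | t < ψ (a - h)} = Ioi (c + h) := by
          ext a
          have : (t < ψ (a - h)) ↔ a - h ∈ U := Iff.rfl
          rw [mem_setOf_eq, this, hUeq]
          simp only [mem_Ioi]
          constructor <;> intro <;> linarith
        rw [hshift, hUeq]
        -- μ (Ioi (c+h)) ≤ l * μ (Ioi c)
        have hun : Ioi (c + h) = ⋃ n : ℕ, Ici (c + h + 1/(n+1)) := by
          ext x
          simp only [mem_Ioi, mem_iUnion, mem_Ici]
          constructor
          · intro hx
            obtain ⟨n, hn⟩ := exists_nat_one_div_lt (show (0:ℝ) < x - (c + h) by linarith)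
            exact ⟨n, by push_cast at hn ⊢; linarith⟩
          · rintro ⟨n, hn⟩
            have : (0:ℝ) < 1/(n+1) := by positivity
            linarith
        rw [hun]
        have hdir : Directed (· ⊆ ·) (fun n : ℕ => Ici (c + h + 1/(n+1))) := by
          apply Monotone.directed_le
          intro n m hnm
          apply Ici_subset_Ici.2
          have h1 : (1:ℝ)/(m+1) ≤ 1/(n+1) := by
            apply one_div_le_one_div_of_le (by positivity)
            have : (n:ℝ) ≤ m := Nat.cast_le.2 hnm
            linarith
          linarith
        rw [hdir.measure_iUnion]
        apply iSup_le
        intro n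
        have hpos : (0:ℝ) < 1/(n+1) := by positivity
        have := htail (c + 1/(n+1)) (by linarith)
        calc μ (Ici (c + h + 1/(n+1))) = μ (Ici (c + 1/(n+1) + h)) := by ring_nf
          _ ≤ ENNReal.ofReal l * μ (Ici (c + 1/(n+1))) := this
          _ ≤ ENNReal.ofReal l * μ (Ioi c) := by
              gcongr
              linarith
  calc ∫⁻ t in Ioi (0:ℝ), μ {a | t < ψ (a - h)}
      ≤ ∫⁻ t in Ioi (0:ℝ), ENNReal.ofReal l * μ {a | t < ψ a} :=
        setLIntegral_mono' measurableSet_Ioi key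
    _ = ENNReal.ofReal l * ∫⁻ t in Ioi (0:ℝ), μ {a | t < ψ a} :=
        lintegral_const_mul' _ _ ENNReal.ofReal_ne_top

lemma core (μ : Measure ℝ) [IsProbabilityMeasure μ] (h l : ℝ) (hh : 0 < h)
    (hl0 : 0 ≤ l) (hl1 : l < 1)
    (htail : ∀ x : ℝ, 0 ≤ x → μ (Set.Ici (x + h)) ≤ ENNReal.ofReal l * μ (Set.Ici x))
    (s : ℝ → ℝ) (hmono : Monotone s) (h0 : ∀ x ≤ (0:ℝ), s x = 0)
    (w : ℝ → ℝ) (hwm : Measurable w) (hw0 : ∀ x, 0 ≤ w x)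
    (hinc : ∀ x, s x - s (x - h) ≤ w x) :
    ∫⁻ x, ENNReal.ofReal ((s x)^2) ∂μ
      ≤ ENNReal.ofReal (4/(1-l)^2) * ∫⁻ x, ENNReal.ofReal ((w x)^2) ∂μ := by
  have hs0 : ∀ x, 0 ≤ s x := by
    intro x
    rcases le_total x 0 with hx | hx
    · rw [h0 x hx]
    · rw [← h0 0 le_rfl]; exact hmono hx
  set B := ∫⁻ x, ENNReal.ofReal ((w x)^2) ∂μ with hB
  by_cases hBtop : B = ⊤
  · rw [hBtop]
    rw [ENNReal.mul_top (by
      simp only [ne_eq, ENNReal.ofReal_eq_zero, not_le]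
      exact div_pos (by norm_num) (by nlinarith))]
    exact le_top
  -- truncated functions
  set ε : ℝ := (1 - l)/2 with hε
  have hεpos : 0 < ε := by rw [hε]; linarith
  have key : ∀ n : ℕ, ∫⁻ x, ENNReal.ofReal ((min (s x) n)^2) ∂μ
      ≤ ENNReal.ofReal (4/(1-l)^2) * B := by
    intro n
    set sn : ℝ → ℝ := fun x => min (s x) n with hsn
    set ψ : ℝ → ℝ := fun x => (sn x)^2 with hψ
    have hsnm : Monotone sn := fun a b hab => min_le_min (hmono hab) le_rfl
    have hsn0 : ∀ x, 0 ≤ sn x := fun x => le_min (hs0 x) (by positivity)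
    have hψm : Monotone ψ := fun a b hab => by
      have := hsnm hab
      have := hsn0 a
      simp only [hψ]
      nlinarith
    have hψ0 : ∀ x ≤ (0:ℝ), ψ x = 0 := by
      intro x hx
      simp only [hψ, hsn]
      rw [h0 x hx, min_eq_left (by positivity)]
      norm_num
    have hψnn : ∀ x, 0 ≤ ψ x := fun x => sq_nonneg _
    have hψle : ∀ x, ψ x ≤ (n:ℝ)^2 := by
      intro x
      have h1 : sn x ≤ n := min_le_right _ _
      have := hsn0 x
      simp only [hψ]
      nlinarith
    set An := ∫⁻ x, ENNReal.ofReal (ψ x) ∂μ with hAn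
    have hAnfin : An ≤ ENNReal.ofReal ((n:ℝ)^2) := by
      rw [hAn]
      calc ∫⁻ x, ENNReal.ofReal (ψ x) ∂μ ≤ ∫⁻ _, ENNReal.ofReal ((n:ℝ)^2) ∂μ :=
            lintegral_mono fun x => ENNReal.ofReal_le_ofReal (hψle x)
        _ = ENNReal.ofReal ((n:ℝ)^2) := by
            rw [lintegral_const, measure_univ, mul_one]
    have hAntop : An ≠ ⊤ := ne_top_of_le_ne_top ENNReal.ofReal_ne_top hAnfin
    -- pointwise bound
    have hpt : ∀ x, ψ x ≤ ψ (x - h) + (ε * ψ x + (1/ε) * (w x)^2) := by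
      intro x
      have hd1 : sn x - sn (x - h) ≤ s x - s (x - h) := by
        have hss : s (x - h) ≤ s x := hmono (by linarith)
        simp only [hsn, min_def]
        split_ifs <;> linarith
      have hd0 : 0 ≤ sn x - sn (x - h) := sub_nonneg.2 (hsnm (by linarith))
      have hdw : sn x - sn (x - h) ≤ w x := le_trans hd1 (hinc x)
      have h2 : ψ x - ψ (x - h) ≤ 2 * sn x * w x := by
        have e1 : ψ x - ψ (x-h) = (sn x - sn (x-h)) * (sn x + sn (x-h)) := by
          simp only [hψ]; ring
        have e2 : sn (x-h) ≤ sn x := hsnm (by linarith)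
        have := hsn0 (x-h)
        have := hsn0 x
        nlinarith
      have amgm : 2 * sn x * w x ≤ ε * (sn x)^2 + (1/ε) * (w x)^2 := by
        have h4 := sq_nonneg (ε * sn x - w x)
        have h5 : ε * (ε * (sn x)^2 + (1/ε) * (w x)^2 - 2 * sn x * w x) = (ε * sn x - w x)^2 := by
          field_simp; ring
        nlinarith [hεpos]
      simp only [hψ] at *
      linarith
    -- integrate
    have hsnmeas : Measurable sn := hsnm.measurable
    have hψmeas : Measurable ψ := hψm.measurable
    have hstep : An ≤ ENNReal.ofReal l * An + (ENNReal.ofReal ε * An + ENNReal.ofReal (1/ε) * B) := by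
      calc An ≤ ∫⁻ x, (ENNReal.ofReal (ψ (x-h)) + (ENNReal.ofReal ε * ENNReal.ofReal (ψ x)
              + ENNReal.ofReal (1/ε) * ENNReal.ofReal ((w x)^2))) ∂μ := by
            apply lintegral_mono
            intro x
            calc ENNReal.ofReal (ψ x) ≤ ENNReal.ofReal (ψ (x-h) + (ε * ψ x + (1/ε) * (w x)^2)) :=
                  ENNReal.ofReal_le_ofReal (hpt x)
              _ ≤ ENNReal.ofReal (ψ (x-h)) + ENNReal.ofReal (ε * ψ x + (1/ε) * (w x)^2) :=
                  ENNReal.ofReal_add_le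
              _ ≤ ENNReal.ofReal (ψ (x-h)) + (ENNReal.ofReal (ε * ψ x) + ENNReal.ofReal ((1/ε) * (w x)^2)) := by
                  gcongr
                  exact ENNReal.ofReal_add_le
              _ = ENNReal.ofReal (ψ (x-h)) + (ENNReal.ofReal ε * ENNReal.ofReal (ψ x)
                  + ENNReal.ofReal (1/ε) * ENNReal.ofReal ((w x)^2)) := by
                  rw [ENNReal.ofReal_mul (le_of_lt hεpos), ENNReal.ofReal_mul (by positivity)]
        _ = ∫⁻ x, ENNReal.ofReal (ψ (x-h)) ∂μ + (ENNReal.ofReal ε * An + ENNReal.ofReal (1/ε) * B) := by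
            rw [lintegral_add_left (by
              exact (ENNReal.measurable_ofReal.comp (hψmeas.comp (measurable_sub_const h))))]
            congr 1
            rw [lintegral_add_left (by
              exact (ENNReal.measurable_ofReal.comp hψmeas).const_mul _)]
            congr 1
            · exact lintegral_const_mul _ (ENNReal.measurable_ofReal.comp hψmeas)
            · exact lintegral_const_mul _ (by
                exact ENNReal.measurable_ofReal.comp ((hwm.pow_const 2)))
        _ ≤ ENNReal.ofReal l * An + (ENNReal.ofReal ε * An + ENNReal.ofReal (1/ε) * B) := by
            gcongr
            exact shift_le μ h l hh htail ψ hψm hψnn hψ0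
    -- pass to reals
    have hBfin : B ≠ ⊤ := hBtop
    set A' := An.toReal with hA'
    set B' := B.toReal with hB'
    have htoReal : A' ≤ l * A' + (ε * A' + (1/ε) * B') := by
      have h1 := ENNReal.toReal_mono (by
          simp only [ne_eq, ENNReal.add_eq_top, ENNReal.mul_eq_top, not_or]
          refine ⟨?_, ?_, ?_⟩ <;> simp [hAntop, hBfin, ENNReal.ofReal_ne_top]) hstep
      rw [ENNReal.toReal_add, ENNReal.toReal_add, ENNReal.toReal_mul, ENNReal.toReal_mul,
        ENNReal.toReal_mul, ENNReal.toReal_ofReal hl0, ENNReal.toReal_ofReal (le_of_lt hεpos),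
        ENNReal.toReal_ofReal (by positivity)] at h1
      · exact h1
      · exact ENNReal.mul_ne_top ENNReal.ofReal_ne_top hAntop
      · exact ENNReal.mul_ne_top ENNReal.ofReal_ne_top hBfin
      · exact ENNReal.mul_ne_top ENNReal.ofReal_ne_top hAntop
      · exact ENNReal.add_ne_top.2 ⟨ENNReal.mul_ne_top ENNReal.ofReal_ne_top hAntop,
          ENNReal.mul_ne_top ENNReal.ofReal_ne_top hBfin⟩
    have hA'bound : A' ≤ 4/(1-l)^2 * B' := by
      have h1l : 0 < 1 - l := by linarith
      have hB'0 : 0 ≤ B' := ENNReal.toReal_nonneg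
      have hA'0 : 0 ≤ A' := ENNReal.toReal_nonneg
      have hinv : 1/((1-l)/2) = 2/(1-l) := by
        field_simp
      rw [hε, hinv] at htoReal
      have h2 : (1-l)/2 * A' ≤ 2/(1-l) * B' := by linarith
      have h4 : (1-l) * ((1-l)/2 * A') ≤ (1-l) * (2/(1-l) * B') :=
        mul_le_mul_of_nonneg_left h2 (le_of_lt h1l)
      have h5 : (1-l) * (2/(1-l) * B') = 2 * B' := by field_simp
      have h3 : (1-l)^2 * A' ≤ 4 * B' := by nlinarith
      have hsq : (0:ℝ) < (1-l)^2 := pow_pos h1l 2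
      calc A' = ((1-l)^2 * A')/(1-l)^2 := by field_simp
        _ ≤ (4 * B')/(1-l)^2 := by gcongr
        _ = 4/(1-l)^2 * B' := by ring
    calc An = ENNReal.ofReal A' := (ENNReal.ofReal_toReal hAntop).symm
      _ ≤ ENNReal.ofReal (4/(1-l)^2 * B') := ENNReal.ofReal_le_ofReal hA'bound
      _ = ENNReal.ofReal (4/(1-l)^2) * ENNReal.ofReal B' := ENNReal.ofReal_mul (by positivity)
      _ = ENNReal.ofReal (4/(1-l)^2) * B := by rw [hB', ENNReal.ofReal_toReal hBtop]
  -- monotone convergence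
  have hmct : ∫⁻ x, ENNReal.ofReal ((s x)^2) ∂μ
      = ⨆ n : ℕ, ∫⁻ x, ENNReal.ofReal ((min (s x) n)^2) ∂μ := by
    rw [← lintegral_iSup]
    · apply lintegral_congr
      intro x
      have hpt : ⨆ n : ℕ, ENNReal.ofReal ((min (s x) n)^2) = ENNReal.ofReal ((s x)^2) := by
        apply le_antisymm
        · apply iSup_le
          intro n
          apply ENNReal.ofReal_le_ofReal
          have h1 : min (s x) n ≤ s x := min_le_left _ _
          have h2 : 0 ≤ min (s x) (n:ℝ) := le_min (hs0 x) (by positivity)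
          nlinarith
        · obtain ⟨n, hn⟩ := exists_nat_ge (s x)
          refine le_trans ?_ (le_iSup _ n)
          rw [min_eq_left hn]
      rw [hpt]
    · intro n
      exact ENNReal.measurable_ofReal.comp
        ((((hmono.measurable).min measurable_const).pow_const 2))
    · intro i j hij x
      apply ENNReal.ofReal_le_ofReal
      have h1 : min (s x) i ≤ min (s x) (j:ℝ) := min_le_min le_rfl (by exact_mod_cast hij)
      have h2 : 0 ≤ min (s x) (i:ℝ) := le_min (hs0 x) (by positivity)
      nlinarith
  rw [hmct]
  exact iSup_le key



lemma conv_anti {f : ℝ → ℝ} (hconv : ConvexOn ℝ Set.univ f) {x₀ : ℝ}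
    (hmin : ∀ x, f x₀ ≤ f x) {a b : ℝ} (hab : a ≤ b) (hb : b ≤ x₀) : f b ≤ f a := by
  rcases eq_or_lt_of_le hab with rfl | hab'
  · exact le_rfl
  rcases eq_or_lt_of_le hb with rfl | hb'
  · exact hmin a
  · set t : ℝ := (x₀ - b)/(x₀ - a) with ht
    have hxa : 0 < x₀ - a := by linarith
    have ht0 : 0 < t := by apply div_pos <;> linarith
    have ht1 : t < 1 := by rw [div_lt_one hxa]; linarith
    have hcomb := hconv.2 (Set.mem_univ a) (Set.mem_univ x₀) (le_of_lt ht0)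
      (by linarith : (0:ℝ) ≤ 1 - t) (by ring)
    have hpt : t • a + (1 - t) • x₀ = b := by
      simp only [smul_eq_mul]
      rw [ht]
      field_simp
      ring
    rw [hpt] at hcomb
    simp only [smul_eq_mul] at hcomb
    nlinarith [hmin a]

lemma conv_mono {f : ℝ → ℝ} (hconv : ConvexOn ℝ Set.univ f) {x₀ : ℝ}
    (hmin : ∀ x, f x₀ ≤ f x) {a b : ℝ} (ha : x₀ ≤ a) (hab : a ≤ b) : f a ≤ f b := by
  rcases eq_or_lt_of_le hab with rfl | hab'
  · exact le_rfl
  rcases eq_or_lt_of_le ha with rfl | ha'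
  · exact hmin b
  · set t : ℝ := (b - a)/(b - x₀) with ht
    have hxb : 0 < b - x₀ := by linarith
    have ht0 : 0 < t := by apply div_pos <;> linarith
    have ht1 : t < 1 := by rw [div_lt_one hxb]; linarith
    have hcomb := hconv.2 (Set.mem_univ x₀) (Set.mem_univ b) (le_of_lt ht0)
      (by linarith : (0:ℝ) ≤ 1 - t) (by ring)
    have hpt : t • x₀ + (1 - t) • b = a := by
      simp only [smul_eq_mul]
      rw [ht]
      field_simp
      ring
    rw [hpt] at hcomb
    simp only [smul_eq_mul] at hcomb
    nlinarith [hmin b]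

lemma conv_pos_mono {f : ℝ → ℝ} (hconv : ConvexOn ℝ Set.univ f) (hf0 : f 0 = 0)
    {u v : ℝ} (hu : 0 < u) (huv : u ≤ v) (hfu : 0 < f u) : f u ≤ f v := by
  rcases eq_or_lt_of_le huv with rfl | huv'
  · exact le_rfl
  · set t : ℝ := u/v with ht
    have hv : 0 < v := by linarith
    have ht0 : 0 < t := div_pos hu hv
    have ht1 : t < 1 := by rw [div_lt_one hv]; linarith
    have hcomb := hconv.2 (Set.mem_univ v) (Set.mem_univ 0) (le_of_lt ht0)
      (by linarith : (0:ℝ) ≤ 1 - t) (by ring)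
    have hpt : t • v + (1 - t) • (0:ℝ) = u := by
      simp only [smul_eq_mul, mul_zero, add_zero]
      rw [ht, div_mul_cancel₀ _ (ne_of_gt hv)]
    rw [hpt] at hcomb
    simp only [smul_eq_mul, hf0, mul_zero, add_zero] at hcomb
    -- hcomb : f u ≤ t * f v
    by_cases hfv : 0 < f v
    · nlinarith
    · push_neg at hfv
      nlinarith

lemma gsq_le {a c : ℝ} (ha : a ≤ 0) (hac : -a ≤ c) :
    (Real.exp (a/2) - Real.exp (-a/2))^2 ≤ (Real.exp (c/2) - Real.exp (-c/2))^2 := by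
  have h1 := gmono hac
  rw [neg_neg] at h1
  have h2 : Real.exp (a/2) ≤ Real.exp (-a/2) := Real.exp_le_exp.2 (by linarith)
  have h3 : 0 ≤ (Real.exp (c/2) - Real.exp (-c/2)) - (Real.exp (-a/2) - Real.exp (a/2)) := by
    linarith
  have h4 : 0 ≤ (Real.exp (c/2) - Real.exp (-c/2)) + (Real.exp (-a/2) - Real.exp (a/2)) := by
    linarith
  nlinarith [mul_nonneg h3 h4]

theorem main0 (μ : Measure ℝ) [IsProbabilityMeasure μ]
    (h l : ℝ) (hh : 0 < h) (hl0 : 0 ≤ l) (hl1 : l < 1)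
    (hsym : μ.map (fun x => -x) = μ)
    (htail : ∀ x : ℝ, 0 ≤ x → μ (Set.Ici (x + h)) ≤ ENNReal.ofReal l * μ (Set.Ici x))
    (f : ℝ → ℝ) (hconv : ConvexOn ℝ Set.univ f) (hf0 : f 0 = 0)
    (x₀ : ℝ) (hx₀ : 0 ≤ x₀) (hmin : ∀ x, f x₀ ≤ f x)
    (Df : ℝ → ℝ)
    (hDf1 : ∀ x, x₀ + h < x → Df x = f x - f (x - h))
    (hDf2 : ∀ x, x₀ - h ≤ x → x ≤ x₀ + h → Df x = f x - f x₀)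
    (hDf3 : ∀ x, x < x₀ - h → Df x = f x - f (x + h)) :
    ∫⁻ x, ENNReal.ofReal ((Real.exp (f x / 2) - Real.exp (-(f x) / 2)) ^ 2) ∂μ ≤
      ENNReal.ofReal (8 / (1 - l) ^ 2) *
        ∫⁻ x, ENNReal.ofReal (Real.exp (f x) * (Df x) ^ 2) ∂μ := by
  -- basic facts about f
  have hfanti : ∀ a b : ℝ, a ≤ b → b ≤ x₀ → f b ≤ f a := fun a b hab hb =>
    conv_anti hconv hmin hab hb
  have hfmono : ∀ a b : ℝ, x₀ ≤ a → a ≤ b → f a ≤ f b := fun a b ha hab =>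
    conv_mono hconv hmin ha hab
  have hfx₀ : f x₀ ≤ 0 := by rw [← hf0]; exact hmin 0
  have hfneg : ∀ x : ℝ, x ≤ 0 → 0 ≤ f x := fun x hx => by
    rw [← hf0]; exact hfanti x 0 hx hx₀
  have hmid : ∀ x : ℝ, 0 ≤ x → x ≤ x₀ → f x ≤ 0 := fun x h1 h2 => by
    rw [← hf0]; exact hfanti 0 x h1 h2
  have hfmeas : Measurable f := by
    have h1 : Antitone (fun x => f (min x x₀)) := fun a b hab =>
      hfanti _ _ (min_le_min hab le_rfl) (min_le_right _ _)
    have h2 : Monotone (fun x => f (max x x₀)) := fun a b hab =>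
      hfmono _ _ (le_max_right _ _) (max_le_max hab le_rfl)
    have heq : f = fun x => if x ≤ x₀ then f (min x x₀) else f (max x x₀) := by
      funext x
      split_ifs with hx
      · rw [min_eq_left hx]
      · rw [max_eq_left (le_of_lt (not_le.1 hx))]
    rw [heq]
    exact Measurable.ite measurableSet_Iic h1.measurable h2.measurable
  have hDfeq : Df = fun x => if x < x₀ - h then f x - f (x + h)
      else if x ≤ x₀ + h then f x - f x₀ else f x - f (x - h) := by
    funext x
    split_ifs with h1 h2
    · exact hDf3 x h1
    · exact hDf2 x (by linarith) h2
    · exact hDf1 x (by linarith)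
  have hDfmeas : Measurable Df := by
    rw [hDfeq]
    apply Measurable.ite measurableSet_Iio
    · exact hfmeas.sub (hfmeas.comp (measurable_add_const h))
    · apply Measurable.ite measurableSet_Iic
      · exact hfmeas.sub measurable_const
      · exact hfmeas.sub (hfmeas.comp (measurable_sub_const h))
  have hDf0 : ∀ x : ℝ, 0 ≤ Df x := by
    intro x
    rcases lt_or_ge x (x₀ - h) with h1 | h1
    · rw [hDf3 x h1]
      have := hfanti x (x + h) (by linarith) (by linarith)
      linarith
    · rcases le_or_gt x (x₀ + h) with h2 | h2
      · rw [hDf2 x h1 h2]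
        have := hmin x
        linarith
      · rw [hDf1 x h2]
        have := hfmono (x - h) x (by linarith) (by linarith)
        linarith
  -- reflection
  have hrefl : ∀ φ : ℝ → ℝ≥0∞, Measurable φ → ∫⁻ x, φ (-x) ∂μ = ∫⁻ x, φ x ∂μ := by
    intro φ hφ
    conv_rhs => rw [← hsym]
    rw [lintegral_map hφ measurable_neg]
  -- the functions
  set g : ℝ → ℝ := fun x => Real.exp (f x / 2) - Real.exp (-(f x) / 2) with hgdef
  have hgnn : ∀ x : ℝ, 0 ≤ f x → 0 ≤ g x := by
    intro x hfx
    have : Real.exp (-(f x)/2) ≤ Real.exp (f x / 2) := Real.exp_le_exp.2 (by linarith)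
    simp only [hgdef]
    linarith
  have hgzero : ∀ x : ℝ, f x = 0 → g x = 0 := by
    intro x hfx
    simp only [hgdef, hfx]
    norm_num
  have hgmeas : Measurable g :=
    ((Real.measurable_exp.comp (hfmeas.div_const 2)).sub
      (Real.measurable_exp.comp ((hfmeas.neg).div_const 2)))
  set sp : ℝ → ℝ := fun x => if 0 < x ∧ 0 ≤ f x then g x else 0 with hspdef
  set wp : ℝ → ℝ := fun x => if 0 < x then Real.exp (f x / 2) * Df x else 0 with hwpdef
  set sm : ℝ → ℝ := fun x => if 0 < x then g (-x) else 0 with hsmdef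
  set wm : ℝ → ℝ := fun x => if 0 < x then Real.exp (f (-x) / 2) * Df (-x) else 0 with hwmdef
  have hspnn : ∀ x, 0 ≤ sp x := by
    intro x
    simp only [hspdef]
    split_ifs with hc
    · exact hgnn x hc.2
    · exact le_rfl
  have hsmnn : ∀ x, 0 ≤ sm x := by
    intro x
    simp only [hsmdef]
    split_ifs with hc
    · exact hgnn (-x) (hfneg (-x) (by linarith))
    · exact le_rfl
  -- monotonicity of sp
  have hspmono : Monotone sp := by
    intro a b hab
    by_cases hca : 0 < a ∧ 0 ≤ f a
    · by_cases hfa : f a = 0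
      · have h1 : sp a = 0 := by
          simp only [hspdef, if_pos hca]
          exact hgzero a hfa
        rw [h1]; exact hspnn b
      · have hfa' : 0 < f a := lt_of_le_of_ne hca.2 (Ne.symm hfa)
        have hfb : f a ≤ f b := conv_pos_mono hconv hf0 hca.1 hab hfa'
        have hcb : 0 < b ∧ 0 ≤ f b := ⟨lt_of_lt_of_le hca.1 hab, by linarith⟩
        simp only [hspdef, if_pos hca, if_pos hcb]
        exact gmono (by linarith)
    · have h1 : sp a = 0 := by simp only [hspdef, if_neg hca]
      rw [h1]; exact hspnn b
  have hsmmono : Monotone sm := by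
    intro a b hab
    by_cases hca : 0 < a
    · have hcb : 0 < b := lt_of_lt_of_le hca hab
      simp only [hsmdef, if_pos hca, if_pos hcb]
      have : f (-a) ≤ f (-b) := hfanti (-b) (-a) (by linarith) (by linarith)
      exact gmono this
    · have h1 : sm a = 0 := by simp only [hsmdef, if_neg hca]
      rw [h1]; exact hsmnn b
  have hsp0 : ∀ x ≤ (0:ℝ), sp x = 0 := by
    intro x hx
    simp only [hspdef]
    rw [if_neg]
    rintro ⟨h1, _⟩
    linarith
  have hsm0 : ∀ x ≤ (0:ℝ), sm x = 0 := by
    intro x hx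
    simp only [hsmdef]
    rw [if_neg]
    intro h1
    linarith
  have hwpm : Measurable wp := by
    apply Measurable.ite
    · exact measurableSet_Ioi
    · exact (Real.measurable_exp.comp (hfmeas.div_const 2)).mul hDfmeas
    · exact measurable_const
  have hwmm : Measurable wm := by
    apply Measurable.ite
    · exact measurableSet_Ioi
    · exact ((Real.measurable_exp.comp ((hfmeas.comp measurable_neg).div_const 2)).mul
        (hDfmeas.comp measurable_neg))
    · exact measurable_const
  have hwp0 : ∀ x, 0 ≤ wp x := by
    intro x
    simp only [hwpdef]
    split_ifs
    · exact mul_nonneg (le_of_lt (Real.exp_pos _)) (hDf0 x)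
    · exact le_rfl
  have hwm0 : ∀ x, 0 ≤ wm x := by
    intro x
    simp only [hwmdef]
    split_ifs
    · exact mul_nonneg (le_of_lt (Real.exp_pos _)) (hDf0 (-x))
    · exact le_rfl
  -- increment bound for sp
  have hincp : ∀ x, sp x - sp (x - h) ≤ wp x := by
    intro x
    by_cases hx : 0 < x
    · have hwpx : wp x = Real.exp (f x / 2) * Df x := by simp only [hwpdef, if_pos hx]
      have hwpnn : 0 ≤ wp x := hwp0 x
      by_cases hfx : 0 ≤ f x
      · by_cases hfx0 : f x = 0
        · have h1 : sp x = 0 := by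
            simp only [hspdef, if_pos (⟨hx, hfx⟩ : 0 < x ∧ 0 ≤ f x)]
            exact hgzero x hfx0
          rw [h1]
          have := hspnn (x - h)
          linarith
        · have hfxpos : 0 < f x := lt_of_le_of_ne hfx (Ne.symm hfx0)
          have hx₀x : x₀ ≤ x := by
            by_contra hcon
            push_neg at hcon
            have := hmid x (le_of_lt hx) (le_of_lt hcon)
            linarith
          have hspx : sp x = g x := by
            simp only [hspdef, if_pos (⟨hx, hfx⟩ : 0 < x ∧ 0 ≤ f x)]
          by_cases hcb : 0 < x - h ∧ 0 ≤ f (x - h)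
          · have hspxh : sp (x - h) = g (x - h) := by simp only [hspdef, if_pos hcb]
            have hba : f (x - h) ≤ f x := by
              rcases le_or_gt x₀ (x - h) with hc | hc
              · exact hfmono (x - h) x hc (by linarith)
              · have := hmid (x - h) (le_of_lt hcb.1) (le_of_lt hc)
                linarith
            have hDfge : f x - f (x - h) ≤ Df x := by
              rcases le_or_gt x (x₀ + h) with hd | hd
              · rw [hDf2 x (by linarith) hd]
                have := hmin (x - h)
                linarith
              · rw [hDf1 x hd]
            have hkey := gdiff_le hcb.2 hba
            rw [hspx, hspxh, hwpx]
            have hexp : (0:ℝ) < Real.exp (f x / 2) := Real.exp_pos _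
            calc g x - g (x - h) ≤ (f x - f (x - h)) * Real.exp (f x / 2) := hkey
              _ ≤ Df x * Real.exp (f x / 2) := by
                  apply mul_le_mul_of_nonneg_right hDfge (le_of_lt hexp)
              _ = Real.exp (f x / 2) * Df x := mul_comm _ _
          · have hspxh : sp (x - h) = 0 := by simp only [hspdef, if_neg hcb]
            have hDfge : f x ≤ Df x := by
              rcases le_or_gt x (x₀ + h) with hd | hd
              · rw [hDf2 x (by linarith) hd]
                linarith
              · rw [hDf1 x hd]
                have hxh : 0 < x - h := by linarith
                have hfxh : ¬ (0 ≤ f (x - h)) := fun hcon => hcb ⟨hxh, hcon⟩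
                push_neg at hfxh
                linarith
            rw [hspx, hspxh, hwpx, sub_zero]
            have hexp : (0:ℝ) < Real.exp (f x / 2) := Real.exp_pos _
            calc g x ≤ f x * Real.exp (f x / 2) := gself_le hfx
              _ ≤ Df x * Real.exp (f x / 2) := by
                  apply mul_le_mul_of_nonneg_right hDfge (le_of_lt hexp)
              _ = Real.exp (f x / 2) * Df x := mul_comm _ _
      · have h1 : sp x = 0 := by
          simp only [hspdef]
          rw [if_neg]
          rintro ⟨_, hcon⟩
          exact hfx hcon
        rw [h1]
        have := hspnn (x - h)
        linarith
    · have h1 : sp x = 0 := hsp0 x (by linarith)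
      have h2 : sp (x - h) = 0 := hsp0 (x - h) (by linarith)
      have h3 : wp x = 0 := by simp only [hwpdef, if_neg hx]
      rw [h1, h2, h3]
      norm_num
  -- increment bound for sm
  have hincm : ∀ x, sm x - sm (x - h) ≤ wm x := by
    intro x
    by_cases hx : 0 < x
    · have hwmx : wm x = Real.exp (f (-x) / 2) * Df (-x) := by simp only [hwmdef, if_pos hx]
      have hsmx : sm x = g (-x) := by simp only [hsmdef, if_pos hx]
      have hfnx : 0 ≤ f (-x) := hfneg (-x) (by linarith)
      have hexp : (0:ℝ) < Real.exp (f (-x) / 2) := Real.exp_pos _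
      by_cases hxh : 0 < x - h
      · have hsmxh : sm (x - h) = g (-(x - h)) := by simp only [hsmdef, if_pos hxh]
        have hng : -(x - h) = -x + h := by ring
        rw [hsmx, hsmxh, hng, hwmx]
        have hb : 0 ≤ f (-x + h) := hfneg (-x + h) (by linarith)
        have hba : f (-x + h) ≤ f (-x) := hfanti (-x) (-x + h) (by linarith) (by linarith)
        have hkey := gdiff_le hb hba
        have hDfge : f (-x) - f (-x + h) ≤ Df (-x) := by
          rcases le_or_gt (x₀ - h) (-x) with hd | hd
          · rw [hDf2 (-x) hd (by linarith)]
            have := hmin (-x + h)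
            linarith
          · rw [hDf3 (-x) hd]
        calc g (-x) - g (-x + h) ≤ (f (-x) - f (-x + h)) * Real.exp (f (-x) / 2) := hkey
          _ ≤ Df (-x) * Real.exp (f (-x) / 2) := by
              apply mul_le_mul_of_nonneg_right hDfge (le_of_lt hexp)
          _ = Real.exp (f (-x) / 2) * Df (-x) := mul_comm _ _
      · have hsmxh : sm (x - h) = 0 := by simp only [hsmdef, if_neg hxh]
        have hDfge : f (-x) ≤ Df (-x) := by
          rcases le_or_gt (x₀ - h) (-x) with hd | hd
          · rw [hDf2 (-x) hd (by linarith)]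
            linarith
          · rw [hDf3 (-x) hd]
            have := hmid (-x + h) (by linarith) (by linarith)
            linarith
        rw [hsmx, hsmxh, hwmx, sub_zero]
        calc g (-x) ≤ f (-x) * Real.exp (f (-x) / 2) := gself_le hfnx
          _ ≤ Df (-x) * Real.exp (f (-x) / 2) := by
              apply mul_le_mul_of_nonneg_right hDfge (le_of_lt hexp)
          _ = Real.exp (f (-x) / 2) * Df (-x) := mul_comm _ _
    · have h1 : sm x = 0 := hsm0 x (by linarith)
      have h2 : sm (x - h) = 0 := hsm0 (x - h) (by linarith)
      have h3 : wm x = 0 := by simp only [hwmdef, if_neg hx]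
      rw [h1, h2, h3]
      norm_num
  -- core applications
  have hcorep := core μ h l hh hl0 hl1 htail sp hspmono hsp0 wp hwpm hwp0 hincp
  have hcorem := core μ h l hh hl0 hl1 htail sm hsmmono hsm0 wm hwmm hwm0 hincm
  have hρmeas : Measurable (fun x => ENNReal.ofReal (Real.exp (f x) * (Df x)^2)) :=
    ENNReal.measurable_ofReal.comp ((Real.measurable_exp.comp hfmeas).mul (hDfmeas.pow_const 2))
  have hexp2 : ∀ t : ℝ, (Real.exp (t/2))^2 = Real.exp t := by
    intro t
    rw [pow_two, ← Real.exp_add]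
    congr 1
    ring
  -- identify the RHS integrals
  have hWp : ∫⁻ x, ENNReal.ofReal ((wp x)^2) ∂μ
      = ∫⁻ x, (if 0 < x then ENNReal.ofReal (Real.exp (f x) * (Df x)^2) else 0) ∂μ := by
    apply lintegral_congr
    intro x
    by_cases hx : 0 < x
    · simp only [hwpdef, if_pos hx]
      congr 1
      rw [mul_pow, hexp2]
    · simp only [hwpdef, if_neg hx]
      norm_num
  have hWm : ∫⁻ x, ENNReal.ofReal ((wm x)^2) ∂μ
      = ∫⁻ x, (if x < 0 then ENNReal.ofReal (Real.exp (f x) * (Df x)^2) else 0) ∂μ := by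
    have h1 : ∫⁻ x, ENNReal.ofReal ((wm x)^2) ∂μ
        = ∫⁻ x, (fun y => if y < 0 then ENNReal.ofReal (Real.exp (f y) * (Df y)^2) else 0) (-x) ∂μ := by
      apply lintegral_congr
      intro x
      by_cases hx : 0 < x
      · simp only [hwmdef, if_pos hx]
        rw [if_pos (by linarith : -x < 0)]
        congr 1
        rw [mul_pow, hexp2]
      · simp only [hwmdef, if_neg hx]
        rw [if_neg (by linarith : ¬ (-x < 0))]
        norm_num
    rw [h1, hrefl _ (Measurable.ite measurableSet_Iio hρmeas measurable_const)]
  -- decompose the LHS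
  set T1 : ℝ → ENNReal := fun x => if x ≤ 0 then ENNReal.ofReal ((g x)^2) else 0 with hT1
  set T2 : ℝ → ENNReal := fun x => if 0 < x ∧ 0 ≤ f x then ENNReal.ofReal ((g x)^2) else 0 with hT2
  set T3 : ℝ → ENNReal := fun x => if 0 < x ∧ f x < 0 then ENNReal.ofReal ((g x)^2) else 0 with hT3
  have hGmeas : Measurable (fun x => ENNReal.ofReal ((g x)^2)) :=
    ENNReal.measurable_ofReal.comp (hgmeas.pow_const 2)
  have hT1meas : Measurable T1 := Measurable.ite measurableSet_Iic hGmeas measurable_const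
  have hT2meas : Measurable T2 := by
    apply Measurable.ite _ hGmeas measurable_const
    exact (measurableSet_Ioi : MeasurableSet (Set.Ioi (0:ℝ))).inter (hfmeas measurableSet_Ici)
  have hsplit : ∀ x, ENNReal.ofReal ((g x)^2) = T1 x + T2 x + T3 x := by
    intro x
    simp only [hT1, hT2, hT3]
    by_cases hx : x ≤ 0
    · rw [if_pos hx, if_neg (by rintro ⟨c, _⟩; linarith), if_neg (by rintro ⟨c, _⟩; linarith)]
      simp
    · push_neg at hx
      rw [if_neg (by linarith)]
      rcases le_or_gt 0 (f x) with hf | hf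
      · rw [if_pos ⟨hx, hf⟩, if_neg (by rintro ⟨_, c⟩; linarith)]
        simp
      · rw [if_neg (by rintro ⟨_, c⟩; linarith), if_pos ⟨hx, hf⟩]
        simp
  have hdecomp : ∫⁻ x, ENNReal.ofReal ((g x)^2) ∂μ
      = ∫⁻ x, T1 x ∂μ + ∫⁻ x, T2 x ∂μ + ∫⁻ x, T3 x ∂μ := by
    calc ∫⁻ x, ENNReal.ofReal ((g x)^2) ∂μ = ∫⁻ x, (T1 x + T2 x + T3 x) ∂μ :=
          lintegral_congr hsplit
      _ = ∫⁻ x, (T1 x + T2 x) ∂μ + ∫⁻ x, T3 x ∂μ := lintegral_add_left (hT1meas.add hT2meas) _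
      _ = ∫⁻ x, T1 x ∂μ + ∫⁻ x, T2 x ∂μ + ∫⁻ x, T3 x ∂μ := by rw [lintegral_add_left hT1meas]
  have hT1eq : ∫⁻ x, T1 x ∂μ = ∫⁻ x, ENNReal.ofReal ((sm x)^2) ∂μ := by
    rw [← hrefl T1 hT1meas]
    apply lintegral_congr
    intro x
    simp only [hT1, hsmdef]
    rcases lt_trichotomy 0 x with hx | hx | hx
    · rw [if_pos (by linarith : -x ≤ 0), if_pos hx]
    · subst hx
      simp [hgzero 0 hf0]
    · rw [if_neg (by linarith : ¬ (-x ≤ 0)), if_neg (by linarith : ¬ ((0:ℝ) < x))]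
      norm_num
  have hT2eq : ∫⁻ x, T2 x ∂μ = ∫⁻ x, ENNReal.ofReal ((sp x)^2) ∂μ := by
    apply lintegral_congr
    intro x
    simp only [hT2, hspdef]
    by_cases hc : 0 < x ∧ 0 ≤ f x
    · rw [if_pos hc, if_pos hc]
    · rw [if_neg hc, if_neg hc]
      norm_num
  have hT3le : ∫⁻ x, T3 x ∂μ ≤ ∫⁻ x, ENNReal.ofReal ((sm x)^2) ∂μ := by
    apply lintegral_mono
    intro x
    simp only [hT3, hsmdef]
    by_cases hc : 0 < x ∧ f x < 0
    · rw [if_pos hc, if_pos hc.1]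
      apply ENNReal.ofReal_le_ofReal
      have hmidpt : 0 ≤ f x + f (-x) := by
        have hcomb := hconv.2 (Set.mem_univ x) (Set.mem_univ (-x))
          (by norm_num : (0:ℝ) ≤ 1/2) (by norm_num : (0:ℝ) ≤ 1/2) (by norm_num)
        have hpt : (1/2 : ℝ) • x + (1/2 : ℝ) • (-x) = 0 := by
          simp only [smul_eq_mul]
          ring
        rw [hpt, hf0] at hcomb
        simp only [smul_eq_mul] at hcomb
        linarith
      simp only [hgdef]
      exact gsq_le (le_of_lt hc.2) (by linarith)
    · rw [if_neg hc]
      exact zero_le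
  -- put everything together
  have hfinal2 : (∫⁻ x, ENNReal.ofReal ((wm x)^2) ∂μ) + (∫⁻ x, ENNReal.ofReal ((wp x)^2) ∂μ)
      ≤ ∫⁻ x, ENNReal.ofReal (Real.exp (f x) * (Df x)^2) ∂μ := by
    rw [hWm, hWp, ← lintegral_add_left (Measurable.ite measurableSet_Iio hρmeas measurable_const)]
    apply lintegral_mono
    intro x
    dsimp only
    rcases lt_trichotomy x 0 with hx | hx | hx
    · rw [if_pos hx, if_neg (by linarith)]
      simp
    · rw [if_neg (by linarith), if_neg (by linarith)]
      simp
    · rw [if_neg (by linarith), if_pos hx]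
      simp
  have hc8 : ENNReal.ofReal (8/(1-l)^2) = 2 * ENNReal.ofReal (4/(1-l)^2) := by
    rw [show (8:ℝ)/(1-l)^2 = 2 * (4/(1-l)^2) by ring,
      ENNReal.ofReal_mul (by norm_num : (0:ℝ) ≤ 2)]
    norm_num
  calc ∫⁻ x, ENNReal.ofReal ((Real.exp (f x / 2) - Real.exp (-(f x) / 2)) ^ 2) ∂μ
      = ∫⁻ x, ENNReal.ofReal ((g x)^2) ∂μ := rfl
    _ = ∫⁻ x, T1 x ∂μ + ∫⁻ x, T2 x ∂μ + ∫⁻ x, T3 x ∂μ := hdecomp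
    _ ≤ (∫⁻ x, ENNReal.ofReal ((sm x)^2) ∂μ) + (∫⁻ x, ENNReal.ofReal ((sp x)^2) ∂μ)
        + (∫⁻ x, ENNReal.ofReal ((sm x)^2) ∂μ) :=
        add_le_add (add_le_add (le_of_eq hT1eq) (le_of_eq hT2eq)) hT3le
    _ ≤ ENNReal.ofReal (4/(1-l)^2) * (∫⁻ x, ENNReal.ofReal ((wm x)^2) ∂μ)
        + ENNReal.ofReal (4/(1-l)^2) * (∫⁻ x, ENNReal.ofReal ((wp x)^2) ∂μ)
        + ENNReal.ofReal (4/(1-l)^2) * (∫⁻ x, ENNReal.ofReal ((wm x)^2) ∂μ) :=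
        add_le_add (add_le_add hcorem hcorep) hcorem
    _ ≤ ENNReal.ofReal (4/(1-l)^2) * (2 * ((∫⁻ x, ENNReal.ofReal ((wm x)^2) ∂μ)
        + (∫⁻ x, ENNReal.ofReal ((wp x)^2) ∂μ))) := by
        rw [two_mul, mul_add, mul_add]
        exact add_le_add le_rfl le_self_add
    _ = ENNReal.ofReal (8/(1-l)^2) * ((∫⁻ x, ENNReal.ofReal ((wm x)^2) ∂μ)
        + (∫⁻ x, ENNReal.ofReal ((wp x)^2) ∂μ)) := by
        rw [hc8]
        ring
    _ ≤ ENNReal.ofReal (8/(1-l)^2) * ∫⁻ x, ENNReal.ofReal (Real.exp (f x) * (Df x)^2) ∂μ :=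
        mul_le_mul_right hfinal2 _


theorem stmt3 (μ : Measure ℝ) [IsProbabilityMeasure μ]
    (h l : ℝ) (hh : 0 < h) (hl0 : 0 ≤ l) (hl1 : l < 1)
    (hsym : μ.map (fun x => -x) = μ)
    (htail : ∀ x : ℝ, 0 ≤ x → μ (Set.Ici (x + h)) ≤ ENNReal.ofReal l * μ (Set.Ici x))
    (f : ℝ → ℝ) (hconv : ConvexOn ℝ Set.univ f) (hf0 : f 0 = 0)
    (x₀ : ℝ) (hmin : ∀ x, f x₀ ≤ f x)
    (Df : ℝ → ℝ)
    (hDf1 : ∀ x, x₀ + h < x → Df x = f x - f (x - h))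
    (hDf2 : ∀ x, x₀ - h ≤ x → x ≤ x₀ + h → Df x = f x - f x₀)
    (hDf3 : ∀ x, x < x₀ - h → Df x = f x - f (x + h)) :
    ∫⁻ x, ENNReal.ofReal ((Real.exp (f x / 2) - Real.exp (-(f x) / 2)) ^ 2) ∂μ ≤
      ENNReal.ofReal (8 / (1 - l) ^ 2) *
        ∫⁻ x, ENNReal.ofReal (Real.exp (f x) * (Df x) ^ 2) ∂μ := by
  rcases le_or_gt 0 x₀ with hx₀ | hx₀
  · exact main0 μ h l hh hl0 hl1 hsym htail f hconv hf0 x₀ hx₀ hmin Df hDf1 hDf2 hDf3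
  · -- reflect everything
    have hfanti : ∀ a b : ℝ, a ≤ b → b ≤ x₀ → f b ≤ f a := fun a b hab hb =>
      conv_anti hconv hmin hab hb
    have hfmono : ∀ a b : ℝ, x₀ ≤ a → a ≤ b → f a ≤ f b := fun a b ha hab =>
      conv_mono hconv hmin ha hab
    have hfmeas : Measurable f := by
      have h1 : Antitone (fun x => f (min x x₀)) := fun a b hab =>
        hfanti _ _ (min_le_min hab le_rfl) (min_le_right _ _)
      have h2 : Monotone (fun x => f (max x x₀)) := fun a b hab =>
        hfmono _ _ (le_max_right _ _) (max_le_max hab le_rfl)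
      have heq : f = fun x => if x ≤ x₀ then f (min x x₀) else f (max x x₀) := by
        funext x
        split_ifs with hx
        · rw [min_eq_left hx]
        · rw [max_eq_left (le_of_lt (not_le.1 hx))]
      rw [heq]
      exact Measurable.ite measurableSet_Iic h1.measurable h2.measurable
    have hDfeq : Df = fun x => if x < x₀ - h then f x - f (x + h)
        else if x ≤ x₀ + h then f x - f x₀ else f x - f (x - h) := by
      funext x
      split_ifs with h1 h2
      · exact hDf3 x h1
      · exact hDf2 x (by linarith) h2
      · exact hDf1 x (by linarith)
    have hDfmeas : Measurable Df := by
      rw [hDfeq]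
      apply Measurable.ite measurableSet_Iio
      · exact hfmeas.sub (hfmeas.comp (measurable_add_const h))
      · apply Measurable.ite measurableSet_Iic
        · exact hfmeas.sub measurable_const
        · exact hfmeas.sub (hfmeas.comp (measurable_sub_const h))
    have hrefl : ∀ φ : ℝ → ℝ≥0∞, Measurable φ → ∫⁻ x, φ (-x) ∂μ = ∫⁻ x, φ x ∂μ := by
      intro φ hφ
      conv_rhs => rw [← hsym]
      rw [lintegral_map hφ measurable_neg]
    have hconv' : ConvexOn ℝ Set.univ (fun x => f (-x)) := by
      refine ⟨convex_univ, ?_⟩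
      intro x _ y _ a b ha hb hab
      have h1 := hconv.2 (Set.mem_univ (-x)) (Set.mem_univ (-y)) ha hb hab
      have h2 : a • (-x) + b • (-y) = -(a • x + b • y) := by
        simp only [smul_eq_mul]
        ring
      rw [h2] at h1
      exact h1
    have hf0' : (fun x => f (-x)) 0 = 0 := by
      simp only [neg_zero]
      exact hf0
    have hmin' : ∀ x, (fun x => f (-x)) (-x₀) ≤ (fun x => f (-x)) x := by
      intro x
      simp only [neg_neg]
      exact hmin (-x)
    have hDf1' : ∀ x, -x₀ + h < x → (fun x => Df (-x)) x = (fun x => f (-x)) x - (fun x => f (-x)) (x - h) := by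
      intro x hx
      simp only []
      rw [show -(x - h) = -x + h from by ring]
      exact hDf3 (-x) (by linarith)
    have hDf2' : ∀ x, -x₀ - h ≤ x → x ≤ -x₀ + h →
        (fun x => Df (-x)) x = (fun x => f (-x)) x - (fun x => f (-x)) (-x₀) := by
      intro x hx1 hx2
      simp only [neg_neg]
      exact hDf2 (-x) (by linarith) (by linarith)
    have hDf3' : ∀ x, x < -x₀ - h → (fun x => Df (-x)) x = (fun x => f (-x)) x - (fun x => f (-x)) (x + h) := by
      intro x hx
      simp only []
      rw [show -(x + h) = -x - h from by ring]
      exact hDf1 (-x) (by linarith)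
    have hmain := main0 μ h l hh hl0 hl1 hsym htail (fun x => f (-x)) hconv' hf0'
      (-x₀) (by linarith) hmin' (fun x => Df (-x)) hDf1' hDf2' hDf3'
    have hm1 : Measurable (fun x => ENNReal.ofReal ((Real.exp (f x / 2) - Real.exp (-(f x) / 2)) ^ 2)) := by
      apply Measurable.ennreal_ofReal
      apply Measurable.pow_const
      exact (Real.measurable_exp.comp (hfmeas.div_const 2)).sub
        (Real.measurable_exp.comp (hfmeas.neg.div_const 2))
    have hm2 : Measurable (fun x => ENNReal.ofReal (Real.exp (f x) * (Df x) ^ 2)) := by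
      apply Measurable.ennreal_ofReal
      exact (Real.measurable_exp.comp hfmeas).mul (hDfmeas.pow_const 2)
    have hLHS := hrefl _ hm1
    have hRHS := hrefl _ hm2
    calc ∫⁻ x, ENNReal.ofReal ((Real.exp (f x / 2) - Real.exp (-(f x) / 2)) ^ 2) ∂μ
        = ∫⁻ x, ENNReal.ofReal ((Real.exp (f (-x) / 2) - Real.exp (-(f (-x)) / 2)) ^ 2) ∂μ :=
          hLHS.symm
      _ ≤ ENNReal.ofReal (8 / (1 - l) ^ 2) *
          ∫⁻ x, ENNReal.ofReal (Real.exp (f (-x)) * (Df (-x)) ^ 2) ∂μ := hmain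
      _ = ENNReal.ofReal (8 / (1 - l) ^ 2) *
          ∫⁻ x, ENNReal.ofReal (Real.exp (f x) * (Df x) ^ 2) ∂μ := by rw [hRHS]
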